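/- For every n ∈ ℕ with n ≥ 1, the Rodrigues polynomial q_n has n distinct real roots, all lying in the open interval (−1, 1): there exist ξ_1 < ξ_2 < ⋯ < ξ_n in (−1, 1) with q_n(ξ_i) = 0 for each i. -/

import Mathlib

open Polynomial

/-- The (unnormalized) Rodrigues polynomial `q_n(x) = dⁿ/dxⁿ[(x² − 1)ⁿ]`. -/
noncomputable def rodrigues (n : ℕ) : ℝ → ℝ :=
  iteratedDeriv n (fun x : ℝ => (x ^ 2 - 1) ^ n)

private lemma aux_iteratedDeriv (p : ℝ[X]) (k : ℕ) :
    iteratedDeriv k (fun x => p.eval x) = fun x => (derivative^[k] p).eval x := by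
  induction k with
  | zero => simp
  | succ k ih =>
    funext x
    rw [iteratedDeriv_succ, ih, Function.iterate_succ_apply']
    exact Polynomial.deriv (p := derivative^[k] p)

/-- Extending a strictly monotone family with values in `(a, b)` by the endpoints. -/
private lemma extend_strictMono {m : ℕ} {a b : ℝ} (hab : a < b) (c : Fin m → ℝ)
    (hc : StrictMono c) (hmem : ∀ i, c i ∈ Set.Ioo a b) :
    StrictMono (Fin.cons a (Fin.snoc c b) : Fin (m + 2) → ℝ) := by
  set g : Fin (m + 1) → ℝ := Fin.snoc c b with hg
  have hga : ∀ j, a < g j := by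
    intro j
    refine Fin.lastCases ?_ ?_ j
    · simp [hg, Fin.snoc_last, hab]
    · intro j'; simpa [hg] using (hmem j').1
  have hgmono : ∀ i j : Fin (m + 1), i < j → g i < g j := by
    intro i j hij
    rcases eq_or_ne j (Fin.last m) with rfl | hjl
    · obtain ⟨i', rfl⟩ := Fin.exists_castSucc_eq.mpr (Fin.ne_last_of_lt hij)
      simpa [hg] using (hmem i').2
    · obtain ⟨j', rfl⟩ := Fin.exists_castSucc_eq.mpr hjl
      obtain ⟨i', rfl⟩ := Fin.exists_castSucc_eq.mpr
        (Fin.ne_last_of_lt (hij.trans (Fin.castSucc_lt_last j')))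
      simp only [hg, Fin.snoc_castSucc]
      exact hc (by simpa using hij)
  intro p q hpq
  rcases eq_or_ne p 0 with rfl | hp0
  · obtain ⟨jq, rfl⟩ := Fin.exists_succ_eq_of_ne_zero hpq.ne'
    simpa using hga jq
  · obtain ⟨jp, rfl⟩ := Fin.exists_succ_eq_of_ne_zero hp0
    obtain ⟨jq, rfl⟩ := Fin.exists_succ_eq_of_ne_zero
      (((Fin.pos_of_ne_zero hp0).trans hpq).ne')
    have hlt : jp < jq := by simpa using hpq
    simpa using hgmono jp jq hlt

/-- One round of Rolle's theorem for polynomials. -/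
private lemma rolle_step {m : ℕ} (p : ℝ[X]) (η : Fin (m + 1) → ℝ) (hm : StrictMono η)
    (hroot : ∀ i, p.eval (η i) = 0) :
    ∃ c : Fin m → ℝ, StrictMono c ∧
      ∀ i, c i ∈ Set.Ioo (η i.castSucc) (η i.succ) ∧ (derivative p).eval (c i) = 0 := by
  have h : ∀ i : Fin m, ∃ x ∈ Set.Ioo (η i.castSucc) (η i.succ),
      (derivative p).eval x = 0 := by
    intro i
    have hlt : η i.castSucc < η i.succ := hm (Fin.castSucc_lt_succ (i := i))
    obtain ⟨x, hx, hx0⟩ := exists_deriv_eq_zero hlt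
      (p.continuous.continuousOn (s := Set.Icc _ _))
      ((hroot _).trans (hroot _).symm)
    refine ⟨x, hx, ?_⟩
    rw [← Polynomial.deriv (p := p) (x := x)]
    exact hx0
  choose c hc1 hc2 using h
  refine ⟨c, ?_, fun i => ⟨hc1 i, hc2 i⟩⟩
  intro i j hij
  have h1 : c i < η i.succ := (hc1 i).2
  have h2 : η j.castSucc < c j := (hc1 j).1
  have h3 : η i.succ ≤ η j.castSucc := hm.monotone (Fin.succ_le_castSucc_iff.mpr hij)
  linarith

private lemma endpoint_root (n k : ℕ) (hk : k < n) (t : ℝ) (ht : t = 1 ∨ t = -1) :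
    (derivative^[k] (((X : ℝ[X]) ^ 2 - 1) ^ n)).eval t = 0 := by
  have hP : (((X : ℝ[X]) ^ 2 - 1) ^ n) ≠ 0 := by
    apply pow_ne_zero
    intro h
    have := congrArg (Polynomial.eval (2 : ℝ)) h
    norm_num at this
  have hdvd : (X - C t) ^ n ∣ (((X : ℝ[X]) ^ 2 - 1) ^ n) := by
    apply pow_dvd_pow_of_dvd
    rcases ht with rfl | rfl
    · exact ⟨X + 1, by ring_nf; simp [C_1]; ring⟩
    · exact ⟨X - 1, by push_cast [map_neg, C_1]; ring⟩
  have hmult : n ≤ Polynomial.rootMultiplicity t (((X : ℝ[X]) ^ 2 - 1) ^ n) :=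
    (Polynomial.le_rootMultiplicity_iff hP).mpr hdvd
  exact Polynomial.isRoot_iterate_derivative_of_lt_rootMultiplicity (lt_of_lt_of_le hk hmult)

/-- Induction: for `k < n` the `k`-th derivative of `(X²-1)ⁿ` has a strictly monotone
family of `k+2` roots starting at `-1` and ending at `1`. -/
private lemma key (n : ℕ) : ∀ k, k + 1 ≤ n → ∃ η : Fin (k + 2) → ℝ, StrictMono η ∧
    η 0 = -1 ∧ η (Fin.last (k + 1)) = 1 ∧
    ∀ i, (derivative^[k] (((X : ℝ[X]) ^ 2 - 1) ^ n)).eval (η i) = 0 := by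
  intro k
  induction k with
  | zero =>
    intro h1
    refine ⟨Fin.cons (-1) (Fin.snoc Fin.elim0 1), ?_, ?_, ?_, ?_⟩
    · exact extend_strictMono (by norm_num) Fin.elim0 (fun a b h => absurd h (by exact a.elim0))
        (fun i => i.elim0)
    · simp
    · show (Fin.cons (-1) (Fin.snoc (Fin.elim0 : Fin 0 → ℝ) 1) : Fin 2 → ℝ) (Fin.last 1) = 1
      have h : (Fin.last 1) = Fin.succ (Fin.last 0) := rfl
      rw [h, Fin.cons_succ, Fin.snoc_last]
    · intro i
      refine Fin.cases ?_ ?_ i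
      · simpa using endpoint_root n 0 h1 (-1) (Or.inr rfl)
      · intro j
        have hj : j = Fin.last 0 := Subsingleton.elim _ _
        rw [Fin.cons_succ, hj, Fin.snoc_last]
        exact endpoint_root n 0 h1 1 (Or.inl rfl)
  | succ k ih =>
    intro h2
    obtain ⟨η, hη, hη0, hηl, hηr⟩ := ih (by omega)
    obtain ⟨c, hc, hcprop⟩ := rolle_step _ η hη hηr
    have hcmem : ∀ i, c i ∈ Set.Ioo (-1 : ℝ) 1 := by
      intro i
      constructor
      · calc (-1 : ℝ) = η 0 := hη0.symm
          _ ≤ η i.castSucc := hη.monotone (Fin.zero_le _)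
          _ < c i := (hcprop i).1.1
      · calc c i < η i.succ := (hcprop i).1.2
          _ ≤ η (Fin.last (k + 1)) := hη.monotone (Fin.le_last _)
          _ = 1 := hηl
    refine ⟨Fin.cons (-1) (Fin.snoc c 1), extend_strictMono (by norm_num) c hc hcmem,
      by simp, ?_, ?_⟩
    · show (Fin.cons (-1) (Fin.snoc c 1) : Fin (k + 3) → ℝ) (Fin.succ (Fin.last (k + 1))) = 1
      rw [Fin.cons_succ, Fin.snoc_last]
    · intro i
      have hQ : derivative^[k + 1] (((X : ℝ[X]) ^ 2 - 1) ^ n)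
          = derivative (derivative^[k] (((X : ℝ[X]) ^ 2 - 1) ^ n)) :=
        Function.iterate_succ_apply' _ _ _
      refine Fin.cases ?_ ?_ i
      · simpa using endpoint_root n (k + 1) h2 (-1) (Or.inr rfl)
      · intro j
        rw [Fin.cons_succ]
        refine Fin.lastCases ?_ ?_ j
        · rw [Fin.snoc_last]
          exact endpoint_root n (k + 1) h2 1 (Or.inl rfl)
        · intro j'
          rw [Fin.snoc_castSucc, hQ]
          exact (hcprop j').2

/-- For `n ≥ 1`, the Rodrigues polynomial `q_n` has `n` distinct real roots, all lying
in the open interval `(−1, 1)`. -/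
theorem rodrigues_roots (n : ℕ) (hn : 1 ≤ n) :
    ∃ ξ : Fin n → ℝ, StrictMono ξ ∧
      ∀ i, ξ i ∈ Set.Ioo (-1 : ℝ) 1 ∧ rodrigues n (ξ i) = 0 := by
  obtain ⟨m, rfl⟩ : ∃ m, n = m + 1 := ⟨n - 1, by omega⟩
  obtain ⟨η, hη, hη0, hηl, hηr⟩ := key (m + 1) m le_rfl
  obtain ⟨c, hc, hcprop⟩ := rolle_step _ η hη hηr
  have hQ : derivative^[m + 1] (((X : ℝ[X]) ^ 2 - 1) ^ (m + 1))
      = derivative (derivative^[m] (((X : ℝ[X]) ^ 2 - 1) ^ (m + 1))) :=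
    Function.iterate_succ_apply' _ _ _
  have hrod : ∀ x : ℝ, rodrigues (m + 1) x
      = (derivative^[m + 1] (((X : ℝ[X]) ^ 2 - 1) ^ (m + 1))).eval x := by
    intro x
    have hfun : (fun x : ℝ => (x ^ 2 - 1) ^ (m + 1))
        = fun x : ℝ => ((((X : ℝ[X]) ^ 2 - 1) ^ (m + 1))).eval x := by
      funext y; simp
    rw [rodrigues, hfun, aux_iteratedDeriv]
  refine ⟨c, hc, fun i => ⟨?_, ?_⟩⟩
  · constructor
    · calc (-1 : ℝ) = η 0 := hη0.symm
        _ ≤ η i.castSucc := hη.monotone (Fin.zero_le _)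
        _ < c i := (hcprop i).1.1
    · calc c i < η i.succ := (hcprop i).1.2
        _ ≤ η (Fin.last (m + 1)) := hη.monotone (Fin.le_last _)
        _ = 1 := hηl
  · rw [hrod, hQ]
    exact (hcprop i).2
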